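/- For every N ≥ 2 and every β ∈ VB_N: tr(ρ^{1|1}_N(β) ∘ μ^{⊗N}) = 0 in ℂ(q). (The virtual U_q(gl(1|1)) invariant of every virtual link vanishes.) -/

import Mathlib

/-!
STATEMENT 18: for every N ≥ 2 (written N = M + 2) and every β ∈ VB_N,
tr(ρ^{1|1}_N(β) ∘ μ^{⊗N}) = 0 in ℂ(q): the virtual U_q(gl(1|1)) invariant of every virtual
link vanishes. The representation ρ^{1|1}_N is characterized by its values on the generators.
-/

noncomputable section

/-- The field `ℂ(q)` of rational functions in one variable over `ℂ`. -/
abbrev Kq : Type := RatFunc ℂ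

/-- The variable `q ∈ ℂ(q)`. -/
def q : Kq := RatFunc.X

/-- The free-group generator corresponding to the classical braid generator `σ i`
(generators of the virtual braid group on `N = M + 2` strands are indexed by `Fin (M + 1)`). -/
def sg {M : ℕ} (i : Fin (M + 1)) : FreeGroup (Fin (M + 1) ⊕ Fin (M + 1)) :=
  FreeGroup.of (Sum.inl i)

/-- The free-group generator corresponding to the virtual crossing generator `χ i`. -/
def cg {M : ℕ} (i : Fin (M + 1)) : FreeGroup (Fin (M + 1) ⊕ Fin (M + 1)) :=
  FreeGroup.of (Sum.inr i)

/-- The defining relations of the virtual braid group `VB_N` on `N = M + 2` strands: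
commutation relations for `|i − j| > 1`, the braid relations `σσσ = σσσ` and `χχχ = χχχ`,
the involutivity `χ_i² = 1`, and the mixed relation `σ_i χ_{i+1} χ_i = χ_{i+1} χ_i σ_{i+1}`. -/
def VBRels (M : ℕ) : Set (FreeGroup (Fin (M + 1) ⊕ Fin (M + 1))) :=
  {r | (∃ i j : Fin (M + 1), 1 < ((i : ℤ) - (j : ℤ)).natAbs ∧
          (r = sg i * sg j * (sg i)⁻¹ * (sg j)⁻¹ ∨
           r = cg i * cg j * (cg i)⁻¹ * (cg j)⁻¹ ∨
           r = sg i * cg j * (sg i)⁻¹ * (cg j)⁻¹)) ∨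
       (∃ i j : Fin (M + 1), (j : ℕ) = (i : ℕ) + 1 ∧
          (r = sg i * sg j * sg i * (sg j * sg i * sg j)⁻¹ ∨
           r = cg i * cg j * cg i * (cg j * cg i * cg j)⁻¹ ∨
           r = sg i * cg j * cg i * (cg j * cg i * sg j)⁻¹)) ∨
       (∃ i : Fin (M + 1), r = cg i * cg i)}

/-- The virtual braid group on `N = M + 2` strands, as a presented group. -/
abbrev VB (M : ℕ) := PresentedGroup (VBRels M)

/-- The endomorphism of `V^{⊗(M+2)}` acting by `T` on the `i`-th and `(i+1)`-st tensor factors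
and by the identity on all other factors. -/
def actOn {d M : ℕ} (T : Matrix (Fin d × Fin d) (Fin d × Fin d) Kq) (i : Fin (M + 1)) :
    Matrix (Fin (M + 2) → Fin d) (Fin (M + 2) → Fin d) Kq :=
  fun a x =>
    T (a i.castSucc, a i.succ) (x i.castSucc, x i.succ) *
      ∏ k : Fin (M + 2),
        if k = i.castSucc ∨ k = i.succ then 1 else if a k = x k then 1 else 0

/-- The encoding of the ordered basis `x_1⊗x_1, x_1⊗x_2, x_2⊗x_1, x_2⊗x_2` of `V ⊗ V`. -/
def enc2 (p : Fin 2 × Fin 2) : Fin 4 :=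
  ⟨2 * (p.1 : ℕ) + (p.2 : ℕ), by have h1 := p.1.isLt; have h2 := p.2.isLt; omega⟩

/-- The matrix by which `σ_i` acts on the `i`-th and `(i+1)`-st tensor factors, in the ordered
basis `x_1⊗x_1, x_1⊗x_2, x_2⊗x_1, x_2⊗x_2`. -/
def R11 : Matrix (Fin 2 × Fin 2) (Fin 2 × Fin 2) Kq :=
  fun a b =>
    !![q, 0, 0, 0;
       0, q - q⁻¹, 1, 0;
       0, 1, 0, 0;
       0, 0, 0, -q⁻¹] (enc2 a) (enc2 b)

/-- The matrix by which `χ_i` acts on the `i`-th and `(i+1)`-st tensor factors. -/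
def T11 : Matrix (Fin 2 × Fin 2) (Fin 2 × Fin 2) Kq :=
  fun a b =>
    !![1, 0, 0, 0;
       0, 0, q, 0;
       0, q⁻¹, 0, 0;
       0, 0, 0, -1] (enc2 a) (enc2 b)

/-- The `N`-fold tensor power `D^{⊗N}` of an endomorphism of `V`. -/
def tensorPow {d N : ℕ} (D : Matrix (Fin d) (Fin d) Kq) :
    Matrix (Fin N → Fin d) (Fin N → Fin d) Kq :=
  fun a b => ∏ k, D (a k) (b k)

/-- The map `μ : V → V`, `μ(x_1) = q·x_1` and `μ(x_2) = −q·x_2`. -/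
def muMat : Matrix (Fin 2) (Fin 2) Kq :=
  fun a b => if a = b then (if a = 0 then q else -q) else 0

/- ======================================================================================
   Auxiliary development.

   The key idea: there is a "fermionic lowering operator" S = ∑ₖ 1^{⊗k} ⊗ c ⊗ (μ⁻¹)^{⊗(N−1−k)}
   (with c(x₁) = x₂, c(x₂) = 0) which commutes with the image of ρ^{1|1} and anticommutes
   with μ^{⊗N}; moreover S admits a homotopy h with S∘h + h∘S = 1 (an explicit contracting
   homotopy of the Koszul-type complex).  Then
       tr(A μ^N) = tr(A μ^N (Sh + hS)) = tr(A μ^N S h) + tr(S A μ^N h)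
                 = tr(A μ^N S h) + tr(A S μ^N h) = tr(A μ^N S h) − tr(A μ^N S h) = 0.
   ====================================================================================== -/

set_option synthInstance.maxHeartbeats 1000000
set_option maxHeartbeats 1000000

namespace St18

abbrev Mat2 := Matrix (Fin 2) (Fin 2) Kq

/-- the lowering map `c : x₁ ↦ x₂, x₂ ↦ 0`. -/
def cm : Mat2 := !![0,0;1,0]
/-- the raising map `c' : x₂ ↦ x₁, x₁ ↦ 0`. -/
def cm' : Mat2 := !![0,1;0,0]
/-- `μ⁻¹`. -/
def muInv : Mat2 := !![q⁻¹,0;0,-q⁻¹]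

/-- Kronecker product of two `2 × 2` matrices, indexed by pairs. -/
def T2 (X Y : Mat2) : Matrix (Fin 2 × Fin 2) (Fin 2 × Fin 2) Kq :=
  fun p r => X p.1 r.1 * Y p.2 r.2

lemma hq : q ≠ 0 := RatFunc.X_ne_zero

lemma f1 : muInv * muMat = 1 := by
  ext i j
  fin_cases i <;> fin_cases j <;>
    simp [muInv, muMat, Matrix.mul_apply, Fin.sum_univ_two, Matrix.one_apply,
      inv_mul_cancel₀ hq]

lemma f2 : muMat * muInv = 1 := by
  ext i j
  fin_cases i <;> fin_cases j <;>
    simp [muInv, muMat, Matrix.mul_apply, Fin.sum_univ_two, Matrix.one_apply,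
      mul_inv_cancel₀ hq]

lemma f3 : cm * cm' + cm' * cm = 1 := by
  ext i j
  fin_cases i <;> fin_cases j <;>
    simp [cm, cm', Matrix.mul_apply, Fin.sum_univ_two, Matrix.one_apply, Matrix.add_apply]

lemma f4 : cm * muMat = (-1 : Kq) • (muMat * cm) := by
  ext i j
  fin_cases i <;> fin_cases j <;>
    simp [cm, muMat, Matrix.mul_apply, Fin.sum_univ_two, Matrix.smul_apply]

lemma f5 : muInv * cm' = (-1 : Kq) • (cm' * muInv) := by
  ext i j
  fin_cases i <;> fin_cases j <;>
    simp [cm', muInv, Matrix.mul_apply, Fin.sum_univ_two, Matrix.smul_apply]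

lemma c1 : T2 (1 : Mat2) 1 = 1 := by
  ext ⟨a,b⟩ ⟨c,d⟩
  simp only [T2, Matrix.one_apply, Prod.mk.injEq]
  by_cases h1 : a = c <;> by_cases h2 : b = d <;> simp [h1, h2]

lemma c2 : T2 muInv muInv * R11 = R11 * T2 muInv muInv := by
  ext p r
  obtain ⟨a,b⟩ := p; obtain ⟨c,d⟩ := r
  fin_cases a <;> fin_cases b <;> fin_cases c <;> fin_cases d <;>
    simp [Matrix.mul_apply, Fintype.sum_prod_type, Fin.sum_univ_two, T2, R11, muInv, enc2,
      Matrix.vecHead, Matrix.vecTail, mul_inv_cancel₀ hq, inv_mul_cancel₀ hq] <;>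
    try ring

lemma c3 : T2 muInv muInv * T11 = T11 * T2 muInv muInv := by
  ext p r
  obtain ⟨a,b⟩ := p; obtain ⟨c,d⟩ := r
  fin_cases a <;> fin_cases b <;> fin_cases c <;> fin_cases d <;>
    simp [Matrix.mul_apply, Fintype.sum_prod_type, Fin.sum_univ_two, T2, T11, muInv, enc2,
      Matrix.vecHead, Matrix.vecTail, mul_inv_cancel₀ hq, inv_mul_cancel₀ hq] <;>
    try ring

lemma c4 : (T2 cm muInv + T2 1 cm) * R11 = R11 * (T2 cm muInv + T2 1 cm) := by
  ext p r
  obtain ⟨a,b⟩ := p; obtain ⟨c,d⟩ := r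
  fin_cases a <;> fin_cases b <;> fin_cases c <;> fin_cases d <;>
    simp [Matrix.mul_apply, Fintype.sum_prod_type, Fin.sum_univ_two, T2, R11, cm, muInv,
      Matrix.add_apply, Matrix.one_apply, enc2, Matrix.vecHead, Matrix.vecTail,
      mul_inv_cancel₀ hq, inv_mul_cancel₀ hq] <;>
    (try ring) <;> (try field_simp) <;> (try (rw [div_self hq]; ring))

lemma c5 : (T2 cm muInv + T2 1 cm) * T11 = T11 * (T2 cm muInv + T2 1 cm) := by
  ext p r
  obtain ⟨a,b⟩ := p; obtain ⟨c,d⟩ := r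
  fin_cases a <;> fin_cases b <;> fin_cases c <;> fin_cases d <;>
    simp [Matrix.mul_apply, Fintype.sum_prod_type, Fin.sum_univ_two, T2, T11, cm, muInv,
      Matrix.add_apply, Matrix.one_apply, enc2, Matrix.vecHead, Matrix.vecTail,
      mul_inv_cancel₀ hq, inv_mul_cancel₀ hq] <;>
    (try ring) <;> (try field_simp) <;> (try (rw [div_self hq]; ring))

variable {M : ℕ}

abbrev ι (M : ℕ) := Fin (M + 2) → Fin 2

/-- Tensor product of a family of one-site operators. -/
def tens (F : Fin (M + 2) → Mat2) : Matrix (ι M) (ι M) Kq :=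
  fun a b => ∏ k, F k (a k) (b k)

lemma tens_mul_tens (F G : Fin (M + 2) → Mat2) :
    tens F * tens G = tens (fun k => F k * G k) := by
  ext a b
  simp only [Matrix.mul_apply, tens]
  rw [Finset.prod_univ_sum]
  rw [Fintype.piFinset_univ]
  exact Finset.sum_congr rfl fun x _ => (Finset.prod_mul_distrib).symm

lemma tens_one : tens (fun _ : Fin (M + 2) => (1 : Mat2)) = 1 := by
  ext a b
  simp only [tens, Matrix.one_apply]
  by_cases h : a = b
  · subst h; simp
  · rw [if_neg h]
    obtain ⟨k, hk⟩ := Function.ne_iff.mp h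
    exact Finset.prod_eq_zero (Finset.mem_univ k) (by simp [Matrix.one_apply, hk])

lemma tens_apply_split (F : Fin (M + 2) → Mat2) (k : Fin (M + 2)) (a b : ι M) :
    tens F a b = F k (a k) (b k) * ∏ m ∈ Finset.univ.erase k, F m (a m) (b m) :=
  (Finset.mul_prod_erase _ _ (Finset.mem_univ k)).symm

lemma tens_eq_smul_of (F G : Fin (M + 2) → Mat2) (k : Fin (M + 2)) (c : Kq)
    (hk : F k = c • G k) (h : ∀ m, m ≠ k → F m = G m) : tens F = c • tens G := by
  ext a b
  have h1 : ∏ m ∈ Finset.univ.erase k, F m (a m) (b m)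
      = ∏ m ∈ Finset.univ.erase k, G m (a m) (b m) :=
    Finset.prod_congr rfl (fun m hm => by rw [h m (Finset.ne_of_mem_erase hm)])
  rw [Matrix.smul_apply, tens_apply_split F k, tens_apply_split G k, hk, h1]
  simp only [Matrix.smul_apply, smul_eq_mul]
  ring

lemma tens_add_of (F G H : Fin (M + 2) → Mat2) (k : Fin (M + 2))
    (hk : F k + G k = H k) (hF : ∀ m, m ≠ k → F m = H m) (hG : ∀ m, m ≠ k → G m = H m) :
    tens F + tens G = tens H := by
  ext a b
  have h1 : ∏ m ∈ Finset.univ.erase k, F m (a m) (b m)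
      = ∏ m ∈ Finset.univ.erase k, H m (a m) (b m) :=
    Finset.prod_congr rfl (fun m hm => by rw [hF m (Finset.ne_of_mem_erase hm)])
  have h2 : ∏ m ∈ Finset.univ.erase k, G m (a m) (b m)
      = ∏ m ∈ Finset.univ.erase k, H m (a m) (b m) :=
    Finset.prod_congr rfl (fun m hm => by rw [hG m (Finset.ne_of_mem_erase hm)])
  rw [Matrix.add_apply, tens_apply_split F k, tens_apply_split G k, tens_apply_split H k,
    h1, h2, ← add_mul, ← Matrix.add_apply, hk]

lemma hne (i : Fin (M + 1)) : i.castSucc ≠ i.succ := (Fin.castSucc_lt_succ : i.castSucc < i.succ).ne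

def ES (i : Fin (M + 1)) : Finset (Fin (M + 2)) :=
  (Finset.univ.erase i.succ).erase i.castSucc

def upd (i : Fin (M + 1)) (a : ι M) (p : Fin 2 × Fin 2) : ι M :=
  Function.update (Function.update a i.castSucc p.1) i.succ p.2

lemma upd_snd (i : Fin (M + 1)) (a : ι M) (p : Fin 2 × Fin 2) :
    upd i a p i.succ = p.2 := by simp [upd]

lemma upd_fst (i : Fin (M + 1)) (a : ι M) (p : Fin 2 × Fin 2) :
    upd i a p i.castSucc = p.1 := by
  simp [upd, Function.update_of_ne (hne i)]

lemma upd_off (i : Fin (M + 1)) (a : ι M) (p : Fin 2 × Fin 2) (m : Fin (M + 2))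
    (h1 : m ≠ i.castSucc) (h2 : m ≠ i.succ) : upd i a p m = a m := by
  simp [upd, Function.update_of_ne h1, Function.update_of_ne h2]

lemma sum_update (i : Fin (M + 1)) (a : ι M) (f : ι M → Kq)
    (h0 : ∀ x : ι M, (∃ m, m ≠ i.castSucc ∧ m ≠ i.succ ∧ x m ≠ a m) → f x = 0) :
    ∑ x : ι M, f x = ∑ p : Fin 2 × Fin 2, f (upd i a p) := by
  classical
  have hinj : Function.Injective (upd i a) := by
    intro p r h
    have h1 := congrFun h i.castSucc
    have h2 := congrFun h i.succ
    rw [upd_fst, upd_fst] at h1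
    rw [upd_snd, upd_snd] at h2
    exact Prod.ext h1 h2
  have himg : ∑ p : Fin 2 × Fin 2, f (upd i a p)
      = ∑ x ∈ Finset.univ.image (upd i a), f x :=
    (Finset.sum_image fun p _ r _ h => hinj h).symm
  rw [himg]
  refine (Finset.sum_subset (Finset.subset_univ _) ?_).symm
  intro x _ hx
  apply h0
  by_contra hc
  push_neg at hc
  apply hx
  refine Finset.mem_image.mpr ⟨(x i.castSucc, x i.succ), Finset.mem_univ _, ?_⟩
  funext m
  by_cases h1 : m = i.succ
  · subst h1; rw [upd_snd]
  · by_cases h2 : m = i.castSucc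
    · subst h2; rw [upd_fst]
    · rw [upd_off i a _ m h2 h1, hc m h2 h1]

lemma tens_split2 (i : Fin (M + 1)) (F : Fin (M + 2) → Mat2) (x b : ι M) :
    tens F x b = F i.castSucc (x i.castSucc) (b i.castSucc) *
      (F i.succ (x i.succ) (b i.succ) * ∏ m ∈ ES i, F m (x m) (b m)) := by
  rw [tens, ← Finset.mul_prod_erase _ _ (Finset.mem_univ i.succ),
      ← Finset.mul_prod_erase _ _ (Finset.mem_erase.mpr ⟨hne i, Finset.mem_univ i.castSucc⟩)]
  show _ = _ * (_ * ∏ m ∈ (Finset.univ.erase i.succ).erase i.castSucc, _)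
  ring

lemma actOn_mul_tens (Tm : Matrix (Fin 2 × Fin 2) (Fin 2 × Fin 2) Kq) (i : Fin (M + 1))
    (F : Fin (M + 2) → Mat2) (a b : ι M) :
    (actOn Tm i * tens F) a b =
      (Tm * T2 (F i.castSucc) (F i.succ)) (a i.castSucc, a i.succ) (b i.castSucc, b i.succ) *
        ∏ m ∈ ES i, F m (a m) (b m) := by
  rw [Matrix.mul_apply]
  rw [sum_update i a _ ?hvan]
  case hvan =>
    intro x ⟨m, hm1, hm2, hm3⟩
    have : actOn Tm i a x = 0 := by
      rw [actOn]
      rw [Finset.prod_eq_zero (Finset.mem_univ m) (by simp [hm1, hm2, (Ne.symm hm3)])]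
      rw [mul_zero]
    rw [this, zero_mul]
  have hterm : ∀ p : Fin 2 × Fin 2, actOn Tm i a (upd i a p) * tens F (upd i a p) b
      = Tm (a i.castSucc, a i.succ) p *
        (F i.castSucc p.1 (b i.castSucc) * F i.succ p.2 (b i.succ)
          * ∏ m ∈ ES i, F m (a m) (b m)) := by
    intro p
    have h1 : actOn Tm i a (upd i a p) = Tm (a i.castSucc, a i.succ) p := by
      rw [actOn, upd_fst, upd_snd]
      rw [Finset.prod_eq_one ?_, mul_one]
      intro k _
      by_cases hk1 : k = i.castSucc
      · simp [hk1]
      · by_cases hk2 : k = i.succ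
        · simp [hk2]
        · simp [hk1, hk2, upd_off i a p k hk1 hk2]
    have h2 : tens F (upd i a p) b
        = F i.castSucc p.1 (b i.castSucc) * (F i.succ p.2 (b i.succ) *
            ∏ m ∈ ES i, F m (a m) (b m)) := by
      rw [tens_split2 i F _ b, upd_fst, upd_snd]
      congr 2
      refine Finset.prod_congr rfl fun m hm => ?_
      have hm1 : m ≠ i.castSucc := (Finset.mem_erase.mp hm).1
      have hm2 : m ≠ i.succ := (Finset.mem_erase.mp (Finset.mem_erase.mp hm).2).1
      rw [upd_off i a p m hm1 hm2]
    rw [h1, h2]; ring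
  rw [Finset.sum_congr rfl (fun p _ => hterm p), Matrix.mul_apply, Finset.sum_mul]
  refine Finset.sum_congr rfl fun p _ => ?_
  simp only [T2]
  try ring

lemma tens_mul_actOn (Tm : Matrix (Fin 2 × Fin 2) (Fin 2 × Fin 2) Kq) (i : Fin (M + 1))
    (F : Fin (M + 2) → Mat2) (a b : ι M) :
    (tens F * actOn Tm i) a b =
      (T2 (F i.castSucc) (F i.succ) * Tm) (a i.castSucc, a i.succ) (b i.castSucc, b i.succ) *
        ∏ m ∈ ES i, F m (a m) (b m) := by
  rw [Matrix.mul_apply]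
  rw [sum_update i b _ ?hvan]
  case hvan =>
    intro x ⟨m, hm1, hm2, hm3⟩
    have : actOn Tm i x b = 0 := by
      rw [actOn]
      rw [Finset.prod_eq_zero (Finset.mem_univ m) (by simp [hm1, hm2, hm3])]
      rw [mul_zero]
    rw [this, mul_zero]
  have hterm : ∀ p : Fin 2 × Fin 2, tens F a (upd i b p) * actOn Tm i (upd i b p) b
      = F i.castSucc (a i.castSucc) p.1 * F i.succ (a i.succ) p.2 *
          Tm p (b i.castSucc, b i.succ) * ∏ m ∈ ES i, F m (a m) (b m) := by
    intro p
    have h1 : actOn Tm i (upd i b p) b = Tm p (b i.castSucc, b i.succ) := by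
      rw [actOn, upd_fst, upd_snd]
      rw [Finset.prod_eq_one ?_, mul_one]
      intro k _
      by_cases hk1 : k = i.castSucc
      · simp [hk1]
      · by_cases hk2 : k = i.succ
        · simp [hk2]
        · simp [hk1, hk2, upd_off i b p k hk1 hk2]
    have h2 : tens F a (upd i b p)
        = F i.castSucc (a i.castSucc) p.1 * (F i.succ (a i.succ) p.2 *
            ∏ m ∈ ES i, F m (a m) (b m)) := by
      rw [tens_split2 i F a _, upd_fst, upd_snd]
      congr 2
      refine Finset.prod_congr rfl fun m hm => ?_
      have hm1 : m ≠ i.castSucc := (Finset.mem_erase.mp hm).1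
      have hm2 : m ≠ i.succ := (Finset.mem_erase.mp (Finset.mem_erase.mp hm).2).1
      rw [upd_off i b p m hm1 hm2]
    rw [h1, h2]; ring
  rw [Finset.sum_congr rfl (fun p _ => hterm p), Matrix.mul_apply, Finset.sum_mul]
  refine Finset.sum_congr rfl fun p _ => ?_
  simp only [T2]
  try ring

lemma comm_single (Tm : Matrix (Fin 2 × Fin 2) (Fin 2 × Fin 2) Kq) (i : Fin (M + 1))
    (F : Fin (M + 2) → Mat2)
    (h : T2 (F i.castSucc) (F i.succ) * Tm = Tm * T2 (F i.castSucc) (F i.succ)) :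
    tens F * actOn Tm i = actOn Tm i * tens F := by
  ext a b
  rw [tens_mul_actOn, actOn_mul_tens, h]

lemma comm_pair (Tm : Matrix (Fin 2 × Fin 2) (Fin 2 × Fin 2) Kq) (i : Fin (M + 1))
    (F G : Fin (M + 2) → Mat2)
    (hFG : ∀ m, m ≠ i.castSucc → m ≠ i.succ → F m = G m)
    (h : (T2 (F i.castSucc) (F i.succ) + T2 (G i.castSucc) (G i.succ)) * Tm
        = Tm * (T2 (F i.castSucc) (F i.succ) + T2 (G i.castSucc) (G i.succ))) :
    (tens F + tens G) * actOn Tm i = actOn Tm i * (tens F + tens G) := by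
  ext a b
  have hrest : ∏ m ∈ ES i, F m (a m) (b m) = ∏ m ∈ ES i, G m (a m) (b m) := by
    refine Finset.prod_congr rfl fun m hm => ?_
    have hm1 : m ≠ i.castSucc := (Finset.mem_erase.mp hm).1
    have hm2 : m ≠ i.succ := (Finset.mem_erase.mp (Finset.mem_erase.mp hm).2).1
    rw [hFG m hm1 hm2]
  rw [Matrix.add_mul, Matrix.mul_add, Matrix.add_apply, Matrix.add_apply,
    tens_mul_actOn, tens_mul_actOn, actOn_mul_tens, actOn_mul_tens, hrest,
    ← add_mul, ← add_mul, ← Matrix.add_apply, ← Matrix.add_apply, ← Matrix.add_mul,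
    ← Matrix.mul_add, h]

/-- The one-site factors of the lowering operator `S`. -/
def SF (k m : Fin (M + 2)) : Mat2 :=
  if (m : ℕ) = (k : ℕ) then cm else if (k : ℕ) < (m : ℕ) then muInv else 1

/-- The scalar `N = M + 2` in `ℂ(q)`. -/
def nK (M : ℕ) : Kq := ((M + 2 : ℕ) : Kq)

lemma nK_ne : nK M ≠ 0 := by
  intro h
  have h2 : ((M + 2 : ℕ) : ℂ) = 0 := by
    apply (algebraMap ℂ Kq).injective
    rw [map_zero, map_natCast]
    exact h
  exact Nat.cast_ne_zero.mpr (by omega) h2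

/-- The one-site factors of the contracting homotopy `h`. -/
def HF (k m : Fin (M + 2)) : Mat2 :=
  if (m : ℕ) = (k : ℕ) then (nK M)⁻¹ • cm' else if (k : ℕ) < (m : ℕ) then muMat else 1

lemma SF_diag (k : Fin (M + 2)) : SF k k = cm := by simp [SF]

lemma HF_diag (k : Fin (M + 2)) : HF k k = (nK M)⁻¹ • cm' := by simp [HF]

lemma SF_lt {k m : Fin (M + 2)} (h : (k : ℕ) < (m : ℕ)) : SF k m = muInv := by
  simp only [SF]; rw [if_neg (by omega), if_pos h]

lemma HF_lt {k m : Fin (M + 2)} (h : (k : ℕ) < (m : ℕ)) : HF k m = muMat := by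
  simp only [HF]; rw [if_neg (by omega), if_pos h]

lemma SF_gt {k m : Fin (M + 2)} (h : (m : ℕ) < (k : ℕ)) : SF k m = 1 := by
  simp only [SF]; rw [if_neg (by omega), if_neg (by omega)]

lemma HF_gt {k m : Fin (M + 2)} (h : (m : ℕ) < (k : ℕ)) : HF k m = 1 := by
  simp only [HF]; rw [if_neg (by omega), if_neg (by omega)]

/-- The lowering operator `S`. -/
def Sop : Matrix (ι M) (ι M) Kq := ∑ k, tens (SF k)

/-- The contracting homotopy `h`. -/
def hop : Matrix (ι M) (ι M) Kq := ∑ k, tens (HF k)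

lemma Sop_comm_actOn (Tm : Matrix (Fin 2 × Fin 2) (Fin 2 × Fin 2) Kq) (i : Fin (M + 1))
    (hT1 : T2 muInv muInv * Tm = Tm * T2 muInv muInv)
    (hT2 : (T2 cm muInv + T2 1 cm) * Tm = Tm * (T2 cm muInv + T2 1 cm)) :
    Sop * actOn Tm i = actOn Tm i * Sop := by
  have e1 : SF i.castSucc i.castSucc = cm := by
    simp [SF]
  have e2 : SF i.castSucc i.succ = muInv := by
    simp only [SF, Fin.coe_castSucc, Fin.val_succ]
    rw [if_neg (by omega), if_pos (by omega)]
  have e3 : SF i.succ i.castSucc = (1 : Mat2) := by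
    simp only [SF, Fin.coe_castSucc, Fin.val_succ]
    rw [if_neg (by omega), if_neg (by omega)]
  have e4 : SF i.succ i.succ = cm := by
    simp [SF]
  have hsplit : (Sop : Matrix (ι M) (ι M) Kq)
      = (tens (SF i.castSucc) + tens (SF i.succ)) + ∑ k ∈ ES i, tens (SF k) := by
    rw [Sop, ← Finset.sum_erase_add _ _ (Finset.mem_univ i.succ),
      ← Finset.sum_erase_add _ _ (Finset.mem_erase.mpr ⟨hne i, Finset.mem_univ i.castSucc⟩)]
    show (∑ k ∈ ES i, tens (SF k)) + _ + _ = _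
    abel
  rw [hsplit, Matrix.add_mul, Matrix.mul_add]
  congr 1
  · refine comm_pair Tm i _ _ ?_ ?_
    · intro m hm1 hm2
      have h1 : (m : ℕ) ≠ (i.castSucc : ℕ) := fun h => hm1 (Fin.val_injective h)
      have h2 : (m : ℕ) ≠ (i.succ : ℕ) := fun h => hm2 (Fin.val_injective h)
      rw [Fin.coe_castSucc] at h1
      rw [Fin.val_succ] at h2
      simp only [SF, Fin.coe_castSucc, Fin.val_succ]
      rcases lt_or_ge ((i : ℕ)) ((m : ℕ)) with h | h
      · rw [if_neg h1, if_neg h2, if_pos h, if_pos (by omega)]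
      · rw [if_neg h1, if_neg h2, if_neg (by omega), if_neg (by omega)]
    · rw [e1, e2, e3, e4]
      exact hT2
  · rw [Finset.sum_mul, Finset.mul_sum]
    refine Finset.sum_congr rfl fun k hk => ?_
    have hk1 : k ≠ i.castSucc := (Finset.mem_erase.mp hk).1
    have hk2 : k ≠ i.succ := (Finset.mem_erase.mp (Finset.mem_erase.mp hk).2).1
    have hk1' : (k : ℕ) ≠ (i : ℕ) := by
      intro h; exact hk1 (Fin.val_injective (by rw [Fin.coe_castSucc, h]))
    have hk2' : (k : ℕ) ≠ (i : ℕ) + 1 := by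
      intro h; exact hk2 (Fin.val_injective (by rw [Fin.val_succ, h]))
    refine comm_single Tm i _ ?_
    rcases lt_or_ge ((k : ℕ)) ((i : ℕ)) with h | h
    · have v1 : SF k i.castSucc = muInv := by
        simp only [SF, Fin.coe_castSucc]
        rw [if_neg (by omega), if_pos (by omega)]
      have v2 : SF k i.succ = muInv := by
        simp only [SF, Fin.val_succ]
        rw [if_neg (by omega), if_pos (by omega)]
      rw [v1, v2]; exact hT1
    · have hgt : (i : ℕ) + 1 < (k : ℕ) := by omega
      have v1 : SF k i.castSucc = (1 : Mat2) := by
        simp only [SF, Fin.coe_castSucc]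
        rw [if_neg (by omega), if_neg (by omega)]
      have v2 : SF k i.succ = (1 : Mat2) := by
        simp only [SF, Fin.val_succ]
        rw [if_neg (by omega), if_neg (by omega)]
      rw [v1, v2, c1, one_mul, mul_one]
  
lemma tensorPow_eq : (tensorPow muMat : Matrix (ι M) (ι M) Kq) = tens (fun _ => muMat) := rfl

lemma mu_Sop_anti : (tensorPow muMat : Matrix (ι M) (ι M) Kq) * Sop
    = (-1 : Kq) • (Sop * tensorPow muMat) := by
  rw [tensorPow_eq, Sop, Finset.mul_sum, Finset.sum_mul, Finset.smul_sum]
  refine Finset.sum_congr rfl fun k _ => ?_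
  rw [tens_mul_tens, tens_mul_tens]
  refine tens_eq_smul_of _ _ k (-1) ?_ ?_
  · have : SF k k = cm := by simp [SF]
    rw [this, f4, smul_smul]
    norm_num
  · intro m hm
    have hm' : (m : ℕ) ≠ (k : ℕ) := fun h => hm (Fin.val_injective h)
    simp only [SF, if_neg hm']
    split_ifs
    · rw [f2, f1]
    · rw [mul_one, one_mul]

lemma Sh_key (k l : Fin (M + 2)) :
    tens (SF k) * tens (HF l) + tens (HF l) * tens (SF k)
      = if l = k then (nK M)⁻¹ • (1 : Matrix (ι M) (ι M) Kq) else 0 := by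
  rw [tens_mul_tens, tens_mul_tens]
  by_cases hlk : l = k
  · subst hlk
    rw [if_pos rfl]
    have hstep : tens (fun m => SF l m * HF l m) + tens (fun m => HF l m * SF l m)
        = tens (fun m => if (m : ℕ) = (l : ℕ) then (nK M)⁻¹ • (1 : Mat2) else 1) := by
      refine tens_add_of _ _ _ l ?_ ?_ ?_
      · rw [if_pos rfl, SF_diag, HF_diag, Matrix.mul_smul, Matrix.smul_mul, ← smul_add, f3]
      · intro m hm
        have hm' : (m : ℕ) ≠ (l : ℕ) := fun h => hm (Fin.val_injective h)
        rw [if_neg hm']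
        rcases lt_or_ge ((l : ℕ)) ((m : ℕ)) with h | h
        · rw [SF_lt h, HF_lt h, f1]
        · rw [SF_gt (by omega), HF_gt (by omega), one_mul]
      · intro m hm
        have hm' : (m : ℕ) ≠ (l : ℕ) := fun h => hm (Fin.val_injective h)
        rw [if_neg hm']
        rcases lt_or_ge ((l : ℕ)) ((m : ℕ)) with h | h
        · rw [SF_lt h, HF_lt h, f2]
        · rw [SF_gt (by omega), HF_gt (by omega), one_mul]
    rw [hstep]
    rw [tens_eq_smul_of (fun m => if (m : ℕ) = (l : ℕ) then (nK M)⁻¹ • (1 : Mat2) else 1)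
      (fun _ => (1 : Mat2)) l ((nK M)⁻¹) (if_pos rfl)
      (fun m hm => if_neg (fun h => hm (Fin.val_injective h))), tens_one]
  · rw [if_neg hlk]
    have hlk' : (l : ℕ) ≠ (k : ℕ) := fun h => hlk (Fin.val_injective h)
    have heq : tens (fun m => SF k m * HF l m)
        = (-1 : Kq) • tens (fun m => HF l m * SF k m) := by
      rcases lt_or_gt_of_ne hlk' with h | h
      · -- l < k : the distinguished site is k, where cm meets muMat
        refine tens_eq_smul_of _ _ k (-1) ?_ ?_
        · rw [SF_diag, HF_lt h]
          exact f4
        · intro m hm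
          have hm' : (m : ℕ) ≠ (k : ℕ) := fun h' => hm (Fin.val_injective h')
          rcases lt_or_ge ((k : ℕ)) ((m : ℕ)) with h2 | h2
          · rw [SF_lt h2, HF_lt (by omega), f1, f2]
          · rw [SF_gt (by omega), one_mul, mul_one]
      · -- k < l : the distinguished site is l, where muInv meets cm'
        refine tens_eq_smul_of _ _ l (-1) ?_ ?_
        · rw [SF_lt h, HF_diag, Matrix.mul_smul, f5, Matrix.smul_mul, smul_comm]
        · intro m hm
          have hm' : (m : ℕ) ≠ (l : ℕ) := fun h' => hm (Fin.val_injective h')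
          rcases lt_or_ge ((l : ℕ)) ((m : ℕ)) with h2 | h2
          · rw [SF_lt (by omega), HF_lt h2, f1, f2]
          · rw [HF_gt (by omega), mul_one, one_mul]
    rw [heq, neg_one_smul, neg_add_cancel]

lemma Sh_hS : (Sop : Matrix (ι M) (ι M) Kq) * hop + hop * Sop = 1 := by
  rw [Sop, hop, Finset.sum_mul_sum, Finset.sum_mul_sum]
  rw [Finset.sum_comm (s := Finset.univ) (t := Finset.univ)
    (f := fun l k => tens (HF l) * tens (SF k))]
  rw [← Finset.sum_add_distrib]
  have : ∀ k : Fin (M + 2),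
      (∑ l, tens (SF k) * tens (HF l)) + (∑ l, tens (HF l) * tens (SF k))
        = (nK M)⁻¹ • (1 : Matrix (ι M) (ι M) Kq) := by
    intro k
    rw [← Finset.sum_add_distrib]
    rw [Finset.sum_congr rfl (fun l _ => Sh_key k l)]
    simp
  rw [Finset.sum_congr rfl (fun k _ => this k)]
  rw [Finset.sum_const, Finset.card_univ, Fintype.card_fin]
  rw [← Nat.cast_smul_eq_nsmul Kq, smul_smul]
  rw [show ((M + 2 : ℕ) : Kq) * (nK M)⁻¹ = 1 from mul_inv_cancel₀ nK_ne, one_smul]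

end St18

theorem statement18 (M : ℕ)
    (ρ : VB M →* (Matrix (Fin (M + 2) → Fin 2) (Fin (M + 2) → Fin 2) Kq)ˣ)
    (hρ : ∀ i : Fin (M + 1),
      (ρ (PresentedGroup.of (Sum.inl i))).val = actOn R11 i ∧
      (ρ (PresentedGroup.of (Sum.inr i))).val = actOn T11 i)
    (β : VB M) :
    Matrix.trace ((ρ β).val * tensorPow muMat) = 0 := by
  classical
  -- `S` commutes with the image of `ρ`
  have hcomm : ∀ γ : VB M, St18.Sop * (ρ γ).val = (ρ γ).val * St18.Sop := by
    intro γ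
    refine PresentedGroup.induction_on
      (C := fun γ => St18.Sop * (ρ γ).val = (ρ γ).val * St18.Sop) γ ?_
    intro z
    refine FreeGroup.induction_on
      (C := fun w => St18.Sop * (ρ (PresentedGroup.mk (VBRels M) w)).val
        = (ρ (PresentedGroup.mk (VBRels M) w)).val * St18.Sop) z ?_ ?_ ?_ ?_
    · beta_reduce
      rw [map_one, map_one, Units.val_one, mul_one, one_mul]
    · intro x
      beta_reduce
      have hx : PresentedGroup.mk (VBRels M) (FreeGroup.of x) = PresentedGroup.of x := rfl
      rw [hx]
      rcases x with i | i
      · rw [(hρ i).1]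
        exact St18.Sop_comm_actOn R11 i St18.c2 St18.c4
      · rw [(hρ i).2]
        exact St18.Sop_comm_actOn T11 i St18.c3 St18.c5
    · intro x hx
      beta_reduce at hx ⊢
      rw [map_inv, map_inv]
      exact (Commute.units_inv_right (hx : Commute St18.Sop _) : Commute St18.Sop _)
    · intro x y hx hy
      beta_reduce at hx hy ⊢
      rw [map_mul, map_mul, Units.val_mul]
      exact (Commute.mul_right (hx : Commute St18.Sop _) (hy : Commute St18.Sop _) :
        Commute St18.Sop _)
  -- the trace argument
  set A := (ρ β).val with hA
  set D := (tensorPow muMat : Matrix (Fin (M + 2) → Fin 2) (Fin (M + 2) → Fin 2) Kq) with hD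
  have h1 := St18.Sh_hS (M := M)
  have h2 := St18.mu_Sop_anti (M := M)
  rw [← hD] at h2
  have hAc : St18.Sop * A = A * St18.Sop := hcomm β
  have key : Matrix.trace (A * D * (St18.hop * St18.Sop))
      = (-1 : Kq) * Matrix.trace (A * D * (St18.Sop * St18.hop)) := by
    have e3 : St18.Sop * D = (-1 : Kq) • (D * St18.Sop) := by
      rw [h2, smul_smul]; norm_num
    have e1 : A * D * (St18.hop * St18.Sop) = (A * D * St18.hop) * St18.Sop := by
      noncomm_ring
    have e2 : St18.Sop * (A * D * St18.hop)
        = (-1 : Kq) • (A * D * (St18.Sop * St18.hop)) := by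
      calc St18.Sop * (A * D * St18.hop)
          = (St18.Sop * A) * D * St18.hop := by noncomm_ring
        _ = (A * St18.Sop) * D * St18.hop := by rw [hAc]
        _ = A * (St18.Sop * D) * St18.hop := by noncomm_ring
        _ = A * ((-1 : Kq) • (D * St18.Sop)) * St18.hop := by rw [e3]
        _ = (-1 : Kq) • (A * D * (St18.Sop * St18.hop)) := by
            rw [Matrix.mul_smul, Matrix.smul_mul]
            congr 1
            noncomm_ring
    rw [e1, Matrix.trace_mul_comm, e2, Matrix.trace_smul, smul_eq_mul]
  have main : Matrix.trace (A * D) = 0 := by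
    have e0 : A * D = A * D * (St18.Sop * St18.hop) + A * D * (St18.hop * St18.Sop) := by
      rw [← mul_add, h1, mul_one]
    rw [e0, Matrix.trace_add, key]
    ring
  exact main

end
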